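/- Let n ≥ 1, 0 < α < 1, and f analytic in a neighborhood of 0 in ℂ. Then ∮_{|z|=ε} (−z)^{α-1-n} f(z) dz = −2i(−1)^{n+1} sin(πα) ∑_{k=0}^{n-1} ε^{α-n+k} f^{(k)}(0)/(k!(n-α-k)) + o(1) as ε ↓ 0, where the circle is traversed with argument θ from 0 to 2π and (−z)^{α-1-n} = (ε e^{i(θ-π)})^{α-1-n} on the circle. -/

import Mathlib

open MeasureTheory Real Set Filter Topology Complex

lemma aux_cpow_eq (e θ : ℝ) (he : 0 < e) (h1 : -Real.pi < θ - Real.pi)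
    (h2 : θ - Real.pi ≤ Real.pi) (A : ℂ) :
    ((e : ℂ) * Complex.exp (Complex.I * ((θ - Real.pi : ℝ) : ℂ))) ^ A
      = Complex.exp (A * ((Real.log e : ℂ) + Complex.I * ((θ - Real.pi : ℝ) : ℂ))) := by
  set w : ℂ := (Real.log e : ℂ) + Complex.I * ((θ - Real.pi : ℝ) : ℂ) with hwdef
  have hw : Complex.exp w = (e : ℂ) * Complex.exp (Complex.I * ((θ - Real.pi : ℝ) : ℂ)) := by
    rw [hwdef, Complex.exp_add, ← Complex.ofReal_exp, Real.exp_log he]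
  have him : w.im = θ - Real.pi := by simp [hwdef]
  rw [← hw, Complex.cpow_def_of_ne_zero (Complex.exp_ne_zero _),
    Complex.log_exp (by rw [him]; exact h1) (by rw [him]; exact h2), mul_comm]


lemma aux_const (e α : ℝ) (he : 0 < e) (n k : ℕ) (hk : k < n) (hα1 : α < 1) :
    Complex.exp (((α-1-n:ℝ):ℂ) * (Real.log e : ℂ)) * (e:ℂ)^(k+1) *
      Complex.exp (-((α-1-n:ℝ):ℂ) * Real.pi * Complex.I) *
      (Complex.exp ((((α-1-n:ℝ):ℂ)+k+1) * (2*Real.pi) * Complex.I) - 1) / (((α-1-n:ℝ):ℂ) + k + 1)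
    = -(2 * Complex.I * (-1)^(n+1) * ((Real.sin (Real.pi * α) : ℝ):ℂ) *
        (((e ^ (α - n + k) : ℝ)):ℂ) / ((((n:ℝ) - α - k : ℝ)) : ℂ)) := by
  set x := Complex.exp ((α:ℂ)*Real.pi*Complex.I) with hxdef
  set y := Complex.exp (-(α:ℂ)*Real.pi*Complex.I) with hydef
  have hne : (((n:ℝ) - α - k : ℝ) : ℂ) ≠ 0 := by
    have h0 : (0:ℝ) < (n:ℝ) - α - k := by
      have : (k:ℝ) + 1 ≤ n := by exact_mod_cast hk
      linarith
    exact Complex.ofReal_ne_zero.mpr (ne_of_gt h0)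
  have h5 : (((α-1-n:ℝ):ℂ)+k+1) = -((((n:ℝ) - α - k : ℝ)) : ℂ) := by push_cast; ring
  have h1 : (((e ^ (α - n + k) : ℝ)):ℂ)
      = Complex.exp (((α-1-n:ℝ):ℂ) * (Real.log e : ℂ)) * (e:ℂ)^(k+1) := by
    have h : e ^ (α - n + k) = Real.exp ((α-1-n) * Real.log e) * e^(k+1) := by
      rw [Real.rpow_def_of_pos he, ← Real.exp_log (pow_pos he (k+1)), ← Real.exp_add,
        Real.log_pow]
      congr 1; push_cast; ring
    rw [h]; push_cast [Complex.ofReal_exp]; ring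
  have h2 : Complex.exp (-((α-1-n:ℝ):ℂ) * Real.pi * Complex.I) = (-1)^(n+1) * y := by
    have h : -((α-1-n:ℝ):ℂ) * Real.pi * Complex.I
        = ((n:ℕ)+1 : ℕ) * (Real.pi * Complex.I) + (-(α:ℂ) * Real.pi * Complex.I) := by
      push_cast; ring
    rw [h, Complex.exp_add, Complex.exp_nat_mul, Complex.exp_pi_mul_I, hydef]
  have h3 : Complex.exp ((((α-1-n:ℝ):ℂ)+k+1) * (2*Real.pi) * Complex.I) = x * x := by
    have h : (((α-1-n:ℝ):ℂ)+k+1) * (2*Real.pi) * Complex.I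
        = (((k:ℤ) - n) : ℤ) * (2*Real.pi*Complex.I)
          + ((α:ℂ) * Real.pi * Complex.I + (α:ℂ) * Real.pi * Complex.I) := by
      push_cast; ring
    rw [h, Complex.exp_add, Complex.exp_int_mul_two_pi_mul_I, one_mul, Complex.exp_add, hxdef]
  have h4' : 2 * Complex.I * ((Real.sin (Real.pi * α) : ℝ):ℂ) = x - y := by
    rw [Complex.ofReal_sin, Complex.sin]
    have hx : Complex.exp (-((Real.pi * α : ℝ):ℂ) * Complex.I) = y := by
      rw [hydef]; congr 1; push_cast; ring
    have hy : Complex.exp (((Real.pi * α : ℝ):ℂ) * Complex.I) = x := by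
      rw [hxdef]; congr 1; push_cast; ring
    rw [hx, hy]
    linear_combination (y - x) * Complex.I_sq
  have hxinv : x * y = 1 := by
    rw [hxdef, hydef, ← Complex.exp_add]; ring_nf; exact Complex.exp_zero
  set N := ((((n:ℝ) - α - k : ℝ)) : ℂ)
  set L := Complex.exp (((α-1-n:ℝ):ℂ) * (Real.log e : ℂ)) * (e:ℂ)^(k+1) with hLdef
  rw [h1, h2, h3, h5, div_neg, neg_inj, div_eq_div_iff hne hne]
  linear_combination N*(-1:ℂ)^(n+1)*L*x*hxinv - N*(-1:ℂ)^(n+1)*L*h4'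

lemma aux_mono (e : ℝ) (he : 0 < e) (A : ℂ) (k : ℕ) (hA : A + k + 1 ≠ 0) :
    (∫ θ in (0:ℝ)..(2*Real.pi),
        Complex.exp (A * ((Real.log e : ℂ) + Complex.I * ((θ - Real.pi : ℝ) : ℂ))) *
          ((e:ℂ) * Complex.exp (Complex.I * (θ:ℂ)))^k *
          (Complex.I * e * Complex.exp (Complex.I * (θ:ℂ))))
      = Complex.exp (A * (Real.log e : ℂ)) * (e:ℂ)^(k+1) *
          Complex.exp (-A * Real.pi * Complex.I) *
          (Complex.exp ((A+k+1) * (2*Real.pi) * Complex.I) - 1) / (A + k + 1) := by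
  have key : ∀ θ : ℝ,
      Complex.exp (A * ((Real.log e : ℂ) + Complex.I * ((θ - Real.pi : ℝ) : ℂ))) *
          ((e:ℂ) * Complex.exp (Complex.I * (θ:ℂ)))^k *
          (Complex.I * e * Complex.exp (Complex.I * (θ:ℂ)))
        = (Complex.exp (A * (Real.log e : ℂ)) * (e:ℂ)^(k+1) *
            Complex.exp (-A * Real.pi * Complex.I) * Complex.I) *
            Complex.exp (((A+k+1) * Complex.I) * (θ:ℂ)) := by
    intro θ
    rw [mul_pow, ← Complex.exp_nat_mul]
    rw [show A * ((Real.log e : ℂ) + Complex.I * ((θ - Real.pi : ℝ) : ℂ))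
        = A * (Real.log e : ℂ) + (-A * Real.pi * Complex.I
            + ((A + k + 1) * Complex.I * θ - (k : ℂ) * (Complex.I * θ) - Complex.I * θ)) by
      push_cast; ring]
    simp only [Complex.exp_add, Complex.exp_sub]
    field_simp
    ring
  rw [intervalIntegral.integral_congr (fun θ _ => key θ),
    intervalIntegral.integral_const_mul, integral_exp_mul_complex (by
      simpa [Complex.I_ne_zero] using hA)]
  rw [mul_comm ((A+k+1)) Complex.I, mul_assoc Complex.I, mul_comm Complex.I]
  push_cast
  simp only [mul_zero, Complex.exp_zero]
  field_simp

theorem stmt_6 (n : ℕ) (hn : 1 ≤ n) (α : ℝ) (hα0 : 0 < α) (hα1 : α < 1)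
    (f : ℂ → ℂ) (r : ℝ) (hr : 0 < r)
    (hf : AnalyticOn ℂ f (Metric.ball (0 : ℂ) r)) :
    Tendsto (fun e : ℝ =>
      (∫ θ in (0 : ℝ)..(2 * Real.pi),
          ((e : ℂ) * Complex.exp (Complex.I * ((θ - Real.pi : ℝ) : ℂ))) ^ ((α - 1 - n : ℝ) : ℂ) *
            f ((e : ℂ) * Complex.exp (Complex.I * (θ : ℂ))) *
            (Complex.I * (e : ℂ) * Complex.exp (Complex.I * (θ : ℂ)))) +
        2 * Complex.I * (-1) ^ (n + 1) * ((Real.sin (Real.pi * α) : ℝ) : ℂ) *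
          ∑ k ∈ Finset.range n,
            ((e ^ (α - n + k) : ℝ) : ℂ) * iteratedDeriv k f 0 /
              ((k.factorial : ℂ) * (((n : ℝ) - α - k : ℝ) : ℂ)))
      (𝓝[>] 0) (𝓝 0) := by
  have hf' : AnalyticOnNhd ℂ f (Metric.ball (0:ℂ) r) :=
    (Metric.isOpen_ball.analyticOn_iff_analyticOnNhd).mp hf
  obtain ⟨p, hp⟩ := hf' 0 (Metric.mem_ball_self hr)
  -- derivative/coefficient relation
  have hcoeff : ∀ k : ℕ, iteratedDeriv k f 0 = (k.factorial : ℂ) * p.coeff k := by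
    intro k
    obtain ⟨R, hpR⟩ := hp
    have := hpR.factorial_smul (1:ℂ) k
    rw [iteratedDeriv_eq_iteratedFDeriv]
    rw [← this, FormalMultilinearSeries.coeff, nsmul_eq_mul]
    norm_num
  -- Taylor remainder bound
  have hbig := hp.isBigO_sub_partialSum_pow n
  rw [Asymptotics.isBigO_iff] at hbig
  obtain ⟨C, hC⟩ := hbig
  rw [Metric.eventually_nhds_iff] at hC
  obtain ⟨δ, hδ0, hδ⟩ := hC
  set A : ℂ := ((α - 1 - (n:ℝ) : ℝ) : ℂ) with hA
  apply squeeze_zero_norm' (a := fun e : ℝ => C * e ^ α * (2 * Real.pi))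
  · filter_upwards [Ioo_mem_nhdsGT_of_mem
      (show (0:ℝ) ∈ Ico 0 (min δ r) from ⟨le_refl _, lt_min hδ0 hr⟩)] with e he
    obtain ⟨he0, heb⟩ := he
    have heδ : e < δ := lt_of_lt_of_le heb (min_le_left _ _)
    have her : e < r := lt_of_lt_of_le heb (min_le_right _ _)
    have hnorm : ∀ θ : ℝ, ‖(e:ℂ) * Complex.exp (Complex.I * (θ:ℂ))‖ = e := by
      intro θ
      rw [norm_mul, Complex.norm_exp]
      simp [abs_of_pos he0]
    have hz : Continuous fun θ : ℝ => (e:ℂ) * Complex.exp (Complex.I * (θ:ℂ)) :=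
      continuous_const.mul (Complex.continuous_exp.comp
        (continuous_const.mul Complex.continuous_ofReal))
    have hcont : Continuous fun θ : ℝ => f ((e:ℂ) * Complex.exp (Complex.I * (θ:ℂ))) := by
      apply hf'.continuousOn.comp_continuous hz
      intro θ
      rw [Metric.mem_ball, dist_zero_right, hnorm θ]
      exact her
    set E2 : ℝ → ℂ := fun θ =>
      Complex.exp (A * ((Real.log e : ℂ) + Complex.I * ((θ - Real.pi : ℝ) : ℂ))) *
        (f ((e:ℂ) * Complex.exp (Complex.I * (θ:ℂ)))
          - p.partialSum n ((e:ℂ) * Complex.exp (Complex.I * (θ:ℂ)))) *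
        (Complex.I * (e:ℂ) * Complex.exp (Complex.I * (θ:ℂ))) with hE2
    set G : ℕ → ℝ → ℂ := fun k θ =>
      p.coeff k * (Complex.exp (A * ((Real.log e : ℂ) + Complex.I * ((θ - Real.pi : ℝ) : ℂ))) *
        ((e:ℂ) * Complex.exp (Complex.I * (θ:ℂ)))^k *
        (Complex.I * (e:ℂ) * Complex.exp (Complex.I * (θ:ℂ)))) with hG
    have hexpcont : Continuous fun θ : ℝ =>
        Complex.exp (A * ((Real.log e : ℂ) + Complex.I * ((θ - Real.pi : ℝ) : ℂ))) :=
      Complex.continuous_exp.comp (continuous_const.mul (continuous_const.add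
        (continuous_const.mul (Complex.continuous_ofReal.comp
          (continuous_id.sub continuous_const)))))
    have hw : Continuous fun θ : ℝ => Complex.I * (e:ℂ) * Complex.exp (Complex.I * (θ:ℂ)) :=
      continuous_const.mul (Complex.continuous_exp.comp
        (continuous_const.mul Complex.continuous_ofReal))
    have hGcont : ∀ k, Continuous (G k) := fun k =>
      continuous_const.mul ((hexpcont.mul (hz.pow k)).mul hw)
    have hE2cont : Continuous E2 :=
      (hexpcont.mul (hcont.sub ((p.partialSum_continuous n).comp hz))).mul hw
    -- Step A: rewrite the cpow integrand
    have congA : (∫ θ in (0:ℝ)..(2 * Real.pi),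
          ((e : ℂ) * Complex.exp (Complex.I * ((θ - Real.pi : ℝ) : ℂ))) ^ A *
            f ((e : ℂ) * Complex.exp (Complex.I * (θ : ℂ))) *
            (Complex.I * (e : ℂ) * Complex.exp (Complex.I * (θ : ℂ))))
        = ∫ θ in (0:ℝ)..(2 * Real.pi),
            (∑ k ∈ Finset.range n, G k θ) + E2 θ := by
      apply intervalIntegral.integral_congr_ae
      refine Filter.Eventually.of_forall fun θ hθ => ?_
      rw [Set.uIoc_of_le (by positivity)] at hθ
      rw [aux_cpow_eq e θ he0 (by linarith [hθ.1]) (by linarith [hθ.2]) A]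
      rw [hG, hE2]
      simp only [FormalMultilinearSeries.partialSum,
        FormalMultilinearSeries.apply_eq_pow_smul_coeff, smul_eq_mul]
      rw [mul_sub, sub_mul, Finset.mul_sum, Finset.sum_mul]
      rw [Finset.sum_congr rfl (fun k _ => show p.coeff k *
        (Complex.exp (A * ((Real.log e : ℂ) + Complex.I * ((θ - Real.pi : ℝ) : ℂ))) *
          ((e:ℂ) * Complex.exp (Complex.I * (θ:ℂ)))^k *
          (Complex.I * (e:ℂ) * Complex.exp (Complex.I * (θ:ℂ))))
        = Complex.exp (A * ((Real.log e : ℂ) + Complex.I * ((θ - Real.pi : ℝ) : ℂ))) *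
          (((e:ℂ) * Complex.exp (Complex.I * (θ:ℂ)))^k * p.coeff k) *
          (Complex.I * (e:ℂ) * Complex.exp (Complex.I * (θ:ℂ))) by ring)]
      ring
    have hsplit : (∫ θ in (0:ℝ)..(2 * Real.pi), (∑ k ∈ Finset.range n, G k θ) + E2 θ)
        = (∑ k ∈ Finset.range n, ∫ θ in (0:ℝ)..(2 * Real.pi), G k θ)
          + ∫ θ in (0:ℝ)..(2 * Real.pi), E2 θ := by
      rw [intervalIntegral.integral_add
        ((continuous_finset_sum _ (fun k _ => hGcont k)).intervalIntegrable _ _)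
        (hE2cont.intervalIntegrable _ _),
        intervalIntegral.integral_finset_sum (fun k _ => (hGcont k).intervalIntegrable _ _)]
    have hGval : ∀ k ∈ Finset.range n,
        (∫ θ in (0:ℝ)..(2 * Real.pi), G k θ)
          = p.coeff k * -(2 * Complex.I * (-1)^(n+1) * ((Real.sin (Real.pi * α) : ℝ):ℂ) *
              (((e ^ (α - n + k) : ℝ)):ℂ) / ((((n:ℝ) - α - k : ℝ)) : ℂ)) := by
      intro k hk
      rw [Finset.mem_range] at hk
      have hAk : A + k + 1 ≠ 0 := by
        rw [hA]
        have h0 : (0:ℝ) < (n:ℝ) - α - k := by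
          have : (k:ℝ) + 1 ≤ n := by exact_mod_cast hk
          linarith
        intro hcon
        apply ne_of_gt h0
        have : ((((n:ℝ) - α - (k:ℝ)) : ℝ) : ℂ) = 0 := by push_cast at hcon ⊢; linear_combination -hcon
        exact_mod_cast this
      rw [hG]
      simp only []
      rw [intervalIntegral.integral_const_mul, aux_mono e he0 A k hAk, hA,
        aux_const e α he0 n k hk hα1]
    have hNe : ∀ k : ℕ, ((((n:ℝ) - α - k : ℝ)) : ℂ) ≠ 0 ∨ True := fun _ => Or.inr trivial
    have hcancel : (∑ k ∈ Finset.range n, ∫ θ in (0:ℝ)..(2 * Real.pi), G k θ)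
        = -(2 * Complex.I * (-1) ^ (n + 1) * ((Real.sin (Real.pi * α) : ℝ) : ℂ) *
            ∑ k ∈ Finset.range n,
              ((e ^ (α - n + k) : ℝ) : ℂ) * iteratedDeriv k f 0 /
                ((k.factorial : ℂ) * (((n : ℝ) - α - k : ℝ) : ℂ))) := by
      rw [Finset.sum_congr rfl hGval, Finset.mul_sum, ← Finset.sum_neg_distrib]
      apply Finset.sum_congr rfl
      intro k hk
      rw [Finset.mem_range] at hk
      rw [hcoeff k]
      have hkf : ((k.factorial : ℕ) : ℂ) ≠ 0 := by exact_mod_cast k.factorial_ne_zero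
      have h0 : (0:ℝ) < (n:ℝ) - α - k := by
        have : (k:ℝ) + 1 ≤ n := by exact_mod_cast hk
        linarith
      have hNk : ((((n:ℝ) - α - k : ℝ)) : ℂ) ≠ 0 := Complex.ofReal_ne_zero.mpr (ne_of_gt h0)
      rw [show (((e ^ (α - n + k) : ℝ)):ℂ) * ((k.factorial:ℂ) * p.coeff k)
        = (k.factorial:ℂ) * ((((e ^ (α - n + k) : ℝ)):ℂ) * p.coeff k) from by ring,
        mul_div_mul_left _ _ hkf]
      ring
    have hbound : ‖∫ θ in (0:ℝ)..(2 * Real.pi), E2 θ‖ ≤ C * e ^ α * (2 * Real.pi) := by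
      have hb : ∀ θ ∈ Set.uIoc (0:ℝ) (2 * Real.pi), ‖E2 θ‖ ≤ C * e ^ α := by
        intro θ _
        rw [hE2]
        rw [show (fun θ : ℝ => Complex.exp (A * ((Real.log e : ℂ) + Complex.I * ((θ - Real.pi : ℝ) : ℂ))) *
            (f ((e:ℂ) * Complex.exp (Complex.I * (θ:ℂ)))
              - p.partialSum n ((e:ℂ) * Complex.exp (Complex.I * (θ:ℂ)))) *
            (Complex.I * (e:ℂ) * Complex.exp (Complex.I * (θ:ℂ)))) θ
          = Complex.exp (A * ((Real.log e : ℂ) + Complex.I * ((θ - Real.pi : ℝ) : ℂ))) *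
            (f ((e:ℂ) * Complex.exp (Complex.I * (θ:ℂ)))
              - p.partialSum n ((e:ℂ) * Complex.exp (Complex.I * (θ:ℂ)))) *
            (Complex.I * (e:ℂ) * Complex.exp (Complex.I * (θ:ℂ))) from rfl, norm_mul, norm_mul]
        have hexp : ‖Complex.exp (A * ((Real.log e : ℂ)
            + Complex.I * ((θ - Real.pi : ℝ) : ℂ)))‖ = e ^ (α - 1 - n) := by
          rw [Complex.norm_exp, Real.rpow_def_of_pos he0]
          congr 1
          rw [hA]
          simp [Complex.mul_re, Complex.add_re, Complex.ofReal_re, Complex.ofReal_im,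
            Complex.mul_im]
          ring
        have hrem : ‖f ((e:ℂ) * Complex.exp (Complex.I * (θ:ℂ)))
            - p.partialSum n ((e:ℂ) * Complex.exp (Complex.I * (θ:ℂ)))‖ ≤ C * e ^ (n:ℕ) := by
          have hd : dist ((e:ℂ) * Complex.exp (Complex.I * (θ:ℂ))) 0 < δ := by
            rw [dist_zero_right, hnorm θ]; exact heδ
          have := hδ hd
          rw [zero_add] at this
          calc ‖_ - _‖ ≤ C * ‖‖(e:ℂ) * Complex.exp (Complex.I * (θ:ℂ))‖ ^ n‖ := this
            _ = C * e ^ (n:ℕ) := by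
                rw [hnorm θ, Real.norm_eq_abs, _root_.abs_of_nonneg (pow_nonneg he0.le n)]
        have hw' : ‖Complex.I * (e:ℂ) * Complex.exp (Complex.I * (θ:ℂ))‖ = e := by
          rw [show Complex.I * (e:ℂ) * Complex.exp (Complex.I * (θ:ℂ))
            = Complex.I * ((e:ℂ) * Complex.exp (Complex.I * (θ:ℂ))) by ring, norm_mul,
            Complex.norm_I, one_mul, hnorm θ]
        rw [hexp, hw']
        calc e ^ (α - 1 - n) * ‖f ((e:ℂ) * Complex.exp (Complex.I * (θ:ℂ)))
              - p.partialSum n ((e:ℂ) * Complex.exp (Complex.I * (θ:ℂ)))‖ * e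
            ≤ e ^ (α - 1 - n) * (C * e ^ (n:ℕ)) * e := by gcongr
          _ = C * e ^ α := by
              have h1 : e ^ (α-1-(n:ℝ)) * e ^ ((n:ℕ):ℝ) * e ^ (1:ℝ) = e ^ α := by
                rw [← Real.rpow_add he0, ← Real.rpow_add he0]; norm_num
              calc e ^ (α - 1 - (n:ℝ)) * (C * e ^ (n:ℕ)) * e
                  = C * (e ^ (α-1-(n:ℝ)) * e ^ ((n:ℕ):ℝ) * e ^ (1:ℝ)) := by
                    rw [Real.rpow_natCast, Real.rpow_one]; ring
                _ = C * e ^ α := by rw [h1]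
      calc ‖∫ θ in (0:ℝ)..(2 * Real.pi), E2 θ‖
          ≤ C * e ^ α * |2 * Real.pi - 0| :=
            intervalIntegral.norm_integral_le_of_norm_le_const hb
        _ = C * e ^ α * (2 * Real.pi) := by
            rw [sub_zero, abs_of_pos (by positivity)]
    rw [congA, hsplit, hcancel, neg_add_cancel_comm]
    exact hbound

  · have h1 : Tendsto (fun e : ℝ => e ^ α) (𝓝[>] (0:ℝ)) (𝓝 0) := by
      have h2 := (Real.continuousAt_rpow_const 0 α (Or.inr hα0.le)).tendsto
      rw [Real.zero_rpow (ne_of_gt hα0)] at h2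
      exact h2.mono_left nhdsWithin_le_nhds
    simpa using (h1.const_mul C).mul_const (2 * Real.pi)
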